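/- Let T > 0, m ≥ 0. Let a₀, a₁ ∈ C¹(ℝ; ℝ), E₀ ∈ C¹(ℝ; ℝ), and let u, v : ℝ × [0,T] → ℂ be C¹ with, for every t, u(·,t), v(·,t) locally square integrable. Define A₀(x,t) = (a₀(x+t)+a₀(x−t))/2 + (a₁(x+t)−a₁(x−t))/2 − (1/2)∫₀^t ∫_{x−(t−s)}^{x+(t−s)} (|u|²+|v|²)(y,s) dy ds and A₁(x,t) = (a₀(x+t)−a₀(x−t))/2 + (a₁(x+t)+a₁(x−t))/2 − (1/2)∫_{x−t}^{x+t} E₀(y) dy + (1/2)∫₀^t ∫_{x−(t−s)}^{x+(t−s)} (|u|²−|v|²)(y,s) dy ds. Suppose u, v solve the Dirac system (∂_t + ∂_x)u = −imv + i(A₀+A₁)u + 2i|v|²u + 2i Re(u v̄)v and (∂_t − ∂_x)v = −imu + i(A₀−A₁)v + 2i|u|²v + 2i Re(u v̄)u on ℝ × [0,T], and that the Gauss law holds initially: (d/dx)E₀(x) = |u(x,0)|² + |v(x,0)|² for all x ∈ ℝ. Then the Lorenz gauge condition ∂_t A₀ = ∂_x A₁ holds on ℝ × (0,T). -/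

import Mathlib

open MeasureTheory Set intervalIntegral Metric Filter Topology

section AuxLemmas

/-- Differentiation under the integral sign for a jointly continuous integrand with jointly
continuous derivative in the parameter. -/
lemma lorenz_param_deriv (F F' : ℝ → ℝ → ℝ) (hF : Continuous (Function.uncurry F))
    (hF' : Continuous (Function.uncurry F'))
    (hd : ∀ r s : ℝ, HasDerivAt (fun q => F q s) (F' r s) r) (a b r₀ : ℝ) :
    HasDerivAt (fun r => ∫ s in a..b, F r s) (∫ s in a..b, F' r₀ s) r₀ := by
  obtain ⟨C, hC⟩ := (isCompact_closedBall r₀ 1 |>.prod isCompact_uIcc).exists_bound_of_continuousOn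
    hF'.continuousOn
  refine (intervalIntegral.hasDerivAt_integral_of_dominated_loc_of_deriv_le
    (F := F) (F' := F') (bound := fun _ => C) (ball_mem_nhds r₀ one_pos)
    (Filter.Eventually.of_forall fun r =>
      (hF.comp (Continuous.prodMk_right r)).aestronglyMeasurable)
    ((hF.comp (Continuous.prodMk_right r₀)).intervalIntegrable a b)
    ((hF'.comp (Continuous.prodMk_right r₀)).aestronglyMeasurable)
    (Filter.Eventually.of_forall fun s hs r hr =>
      hC (r, s) ⟨ball_subset_closedBall hr, uIoc_subset_uIcc hs⟩)
    intervalIntegrable_const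
    (Filter.Eventually.of_forall fun s _ r _ => hd r s)).2

/-- The error term coming from a moving endpoint has zero derivative. -/
lemma lorenz_slope_zero_deriv (F : ℝ → ℝ → ℝ) (hF : Continuous (Function.uncurry F))
    {e : ℝ → ℝ} {e' r₀ : ℝ} (he : HasDerivAt e e' r₀) :
    HasDerivAt (fun r => ∫ s in (e r₀)..(e r), (F r s - F r₀ s)) 0 r₀ := by
  set D : ℝ → ℝ := fun r => ∫ s in (e r₀)..(e r), (F r s - F r₀ s) with hD
  have hD0 : D r₀ = 0 := intervalIntegral.integral_same
  rw [hasDerivAt_iff_tendsto_slope]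
  rw [Metric.tendsto_nhds]
  intro ε hε
  have hK : IsCompact ((closedBall r₀ 1) ×ˢ (closedBall (e r₀) 1)) :=
    (isCompact_closedBall _ _).prod (isCompact_closedBall _ _)
  have huc := hK.uniformContinuousOn_of_continuous hF.continuousOn
  set ε' : ℝ := ε / (2 * (|e'| + 1)) with hε'def
  have hepos : 0 < |e'| + 1 := by positivity
  have hε' : 0 < ε' := by positivity
  obtain ⟨δ, hδ, hδ'⟩ := Metric.uniformContinuousOn_iff.1 huc ε' hε'
  have h1 : ∀ᶠ r in 𝓝[≠] r₀, |e r - e r₀| ≤ 1 := by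
    have : Filter.Tendsto e (𝓝[≠] r₀) (𝓝 (e r₀)) :=
      he.continuousAt.continuousWithinAt.tendsto
    filter_upwards [this (Metric.closedBall_mem_nhds _ one_pos)] with r hr
    simpa [Real.dist_eq] using hr
  have h2 : ∀ᶠ r in 𝓝[≠] r₀, |slope e r₀ r| ≤ |e'| + 1 := by
    have := hasDerivAt_iff_tendsto_slope.1 he
    filter_upwards [this (Metric.closedBall_mem_nhds _ one_pos)] with r hr
    have h : |slope e r₀ r - e'| ≤ 1 := by simpa [Real.dist_eq] using hr
    have h' := abs_sub_abs_le_abs_sub (slope e r₀ r) e'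
    linarith
  have h3 : ∀ᶠ r in 𝓝[≠] r₀, |r - r₀| < δ ∧ |r - r₀| ≤ 1 := by
    have : ∀ᶠ r in 𝓝 r₀, |r - r₀| < min δ 1 := by
      have := Metric.ball_mem_nhds r₀ (lt_min hδ one_pos)
      filter_upwards [this] with r hr; simpa [Real.dist_eq] using hr
    filter_upwards [nhdsWithin_le_nhds this] with r hr
    exact ⟨lt_of_lt_of_le hr (min_le_left _ _), le_trans hr.le (min_le_right _ _)⟩
  filter_upwards [h1, h2, h3, self_mem_nhdsWithin] with r hr1 hr2 hr3'' hrne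
  obtain ⟨hr3, hr3'⟩ := hr3''
  have hrne' : r - r₀ ≠ 0 := sub_ne_zero.2 hrne
  have hbnd : ∀ s ∈ uIoc (e r₀) (e r), ‖F r s - F r₀ s‖ ≤ ε' := by
    intro s hs
    have hs' : s ∈ uIcc (e r₀) (e r) := uIoc_subset_uIcc hs
    have hsb : s ∈ closedBall (e r₀) 1 := by
      have := abs_sub_left_of_mem_uIcc hs'
      simp only [mem_closedBall, Real.dist_eq]
      linarith [le_trans this hr1]
    have hp : (r, s) ∈ (closedBall r₀ 1) ×ˢ (closedBall (e r₀) 1) :=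
      ⟨by simp [Real.dist_eq, hr3'], hsb⟩
    have hq : (r₀, s) ∈ (closedBall r₀ 1) ×ˢ (closedBall (e r₀) 1) :=
      ⟨mem_closedBall_self one_pos.le, hsb⟩
    have hdist : dist (r, s) (r₀, s) < δ := by
      simp [Prod.dist_eq, Real.dist_eq, hr3]
    have := hδ' _ hp _ hq hdist
    simp only [Function.uncurry_apply_pair, Real.dist_eq] at this
    simpa [Real.norm_eq_abs] using this.le
  have hDr : ‖D r‖ ≤ ε' * |e r - e r₀| := by
    have := intervalIntegral.norm_integral_le_of_norm_le_const hbnd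
    simpa [mul_comm] using this
  have hkey : dist (slope D r₀ r) 0 ≤ ε' * (|e'| + 1) := by
    rw [dist_zero_right, slope_def_field, hD0, sub_zero]
    rw [Real.norm_eq_abs, abs_div]
    rw [div_le_iff₀ (abs_pos.2 hrne')]
    calc |D r| ≤ ε' * |e r - e r₀| := by simpa [Real.norm_eq_abs] using hDr
      _ = ε' * (|slope e r₀ r| * |r - r₀|) := by
          rw [slope_def_field, abs_div, div_mul_cancel₀]
          exact abs_ne_zero.2 hrne'
      _ ≤ ε' * ((|e'| + 1) * |r - r₀|) := by
          have := mul_le_mul_of_nonneg_right hr2 (abs_nonneg (r - r₀))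
          nlinarith [hε'.le]
      _ = ε' * (|e'| + 1) * |r - r₀| := by ring
  calc dist (slope D r₀ r) 0 ≤ ε' * (|e'| + 1) := hkey
    _ = ε / 2 := by rw [hε'def, div_mul_eq_mul_div, mul_div_mul_right _ _ hepos.ne']
    _ < ε := by linarith

/-- Leibniz rule with one moving endpoint and a parameter in the integrand. -/
lemma lorenz_endpoint_param_deriv (F F' : ℝ → ℝ → ℝ) (hF : Continuous (Function.uncurry F))
    (hF' : Continuous (Function.uncurry F'))
    (hd : ∀ r s : ℝ, HasDerivAt (fun q => F q s) (F' r s) r)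
    (c : ℝ) {e : ℝ → ℝ} {e' r₀ : ℝ} (he : HasDerivAt e e' r₀) :
    HasDerivAt (fun r => ∫ s in c..(e r), F r s)
      (F r₀ (e r₀) * e' + ∫ s in c..(e r₀), F' r₀ s) r₀ := by
  have hFr : ∀ r : ℝ, Continuous (F r) := fun r => hF.comp (Continuous.prodMk_right r)
  have h₁ : HasDerivAt (fun r => ∫ s in c..(e r), F r₀ s) (F r₀ (e r₀) * e') r₀ := by
    have hftc : HasDerivAt (fun z => ∫ s in c..z, F r₀ s) (F r₀ (e r₀)) (e r₀) :=
      intervalIntegral.integral_hasDerivAt_right ((hFr r₀).intervalIntegrable _ _)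
        ((hFr r₀).stronglyMeasurableAtFilter _ _) (hFr r₀).continuousAt
    exact hftc.comp r₀ he
  have h₂a : HasDerivAt (fun r => ∫ s in c..(e r₀), (F r s - F r₀ s))
      (∫ s in c..(e r₀), F' r₀ s) r₀ := by
    have := lorenz_param_deriv (fun r s => F r s - F r₀ s) F'
      (hF.sub (hF.comp (continuous_const.prodMk continuous_snd)))
      hF' (fun r s => (hd r s).sub_const _) c (e r₀) r₀
    simpa using this
  have h₂b := lorenz_slope_zero_deriv F hF he
  have hsum := (h₁.add h₂a).add h₂b
  have heq : (fun r => ((∫ s in c..(e r), F r₀ s) + ∫ s in c..(e r₀), (F r s - F r₀ s))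
      + ∫ s in (e r₀)..(e r), (F r s - F r₀ s)) = fun r => ∫ s in c..(e r), F r s := by
    funext r
    have hint1 : IntervalIntegrable (fun s => F r s - F r₀ s) volume c (e r₀) :=
      ((hFr r).sub (hFr r₀)).intervalIntegrable _ _
    have hint2 : IntervalIntegrable (fun s => F r s - F r₀ s) volume (e r₀) (e r) :=
      ((hFr r).sub (hFr r₀)).intervalIntegrable _ _
    rw [add_assoc, intervalIntegral.integral_add_adjacent_intervals hint1 hint2]
    rw [← intervalIntegral.integral_add (g := fun s => F r s - F r₀ s) ((hFr r₀).intervalIntegrable _ _)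
      (((hFr r).sub (hFr r₀)).intervalIntegrable _ _)]
    simp
  simp only [Pi.add_def] at hsum
  rw [heq] at hsum
  simpa using hsum

/-- General Leibniz rule: both endpoints moving and a parameter in the integrand. -/
lemma lorenz_leibniz (F F' : ℝ → ℝ → ℝ) (hF : Continuous (Function.uncurry F))
    (hF' : Continuous (Function.uncurry F'))
    (hd : ∀ r s : ℝ, HasDerivAt (fun q => F q s) (F' r s) r)
    {e₁ e₂ : ℝ → ℝ} {e₁' e₂' r₀ : ℝ}
    (h₁ : HasDerivAt e₁ e₁' r₀) (h₂ : HasDerivAt e₂ e₂' r₀) :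
    HasDerivAt (fun r => ∫ s in (e₁ r)..(e₂ r), F r s)
      (F r₀ (e₂ r₀) * e₂' - F r₀ (e₁ r₀) * e₁'
        + ∫ s in (e₁ r₀)..(e₂ r₀), F' r₀ s) r₀ := by
  have hFr : ∀ r : ℝ, Continuous (F r) := fun r => hF.comp (Continuous.prodMk_right r)
  have hF'r : ∀ r : ℝ, Continuous (F' r) := fun r => hF'.comp (Continuous.prodMk_right r)
  have hA := lorenz_endpoint_param_deriv F F' hF hF' hd 0 h₂
  have hB := lorenz_endpoint_param_deriv F F' hF hF' hd 0 h₁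
  have hsub := hA.sub hB
  have heq : (fun r => (∫ s in (0:ℝ)..(e₂ r), F r s) - ∫ s in (0:ℝ)..(e₁ r), F r s)
      = fun r => ∫ s in (e₁ r)..(e₂ r), F r s := by
    funext r
    exact intervalIntegral.integral_interval_sub_left
      ((hFr r).intervalIntegrable _ _) ((hFr r).intervalIntegrable _ _)
  simp only [Pi.sub_def] at hsub
  rw [heq] at hsub
  have hval : (F r₀ (e₂ r₀) * e₂' + ∫ s in (0:ℝ)..(e₂ r₀), F' r₀ s)
      - (F r₀ (e₁ r₀) * e₁' + ∫ s in (0:ℝ)..(e₁ r₀), F' r₀ s)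
      = F r₀ (e₂ r₀) * e₂' - F r₀ (e₁ r₀) * e₁' + ∫ s in (e₁ r₀)..(e₂ r₀), F' r₀ s := by
    have key := intervalIntegral.integral_interval_sub_left (μ := volume)
      ((hF'r r₀).intervalIntegrable 0 (e₂ r₀)) ((hF'r r₀).intervalIntegrable 0 (e₁ r₀))
    linarith
  rw [hval] at hsub
  exact hsub

/-- Joint continuity of a parametric interval integral with moving endpoints. -/
lemma lorenz_cont_param_integral {X : Type*} [TopologicalSpace X] [T2Space X]
    (f : ℝ → ℝ → ℝ) (hf : Continuous (Function.uncurry f))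
    (g₁ g₂ h : X → ℝ) (hg₁ : Continuous g₁) (hg₂ : Continuous g₂) (hh : Continuous h) :
    Continuous fun p : X => ∫ y in (g₁ p)..(g₂ p), f y (h p) := by
  have hfc : ∀ p : X, Continuous fun y => f y (h p) := fun p =>
    hf.comp (continuous_id.prodMk continuous_const)
  have heq : (fun p : X => ∫ y in (g₁ p)..(g₂ p), f y (h p))
      = fun p => (∫ y in (0:ℝ)..(g₂ p), f y (h p)) - ∫ y in (0:ℝ)..(g₁ p), f y (h p) := by
    funext p
    rw [intervalIntegral.integral_interval_sub_left
      ((hfc p).intervalIntegrable _ _) ((hfc p).intervalIntegrable _ _)]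
  rw [heq]
  have hunc : Continuous (Function.uncurry fun (p : X) (y : ℝ) => f y (h p)) := by
    have : Continuous fun q : X × ℝ => (q.2, h q.1) :=
      continuous_snd.prodMk (hh.comp continuous_fst)
    exact hf.comp this
  exact (intervalIntegral.continuous_parametric_intervalIntegral_of_continuous hunc hg₂).sub
    (intervalIntegral.continuous_parametric_intervalIntegral_of_continuous hunc hg₁)

/-- Derivative of the squared norm of a complex-valued function of a real variable. -/
lemma lorenz_hasDerivAt_norm_sq {f : ℝ → ℂ} {f' : ℂ} {t : ℝ} (hf : HasDerivAt f f' t) :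
    HasDerivAt (fun t => ‖f t‖ ^ 2) (2 * ((starRingEnd ℂ) (f t) * f').re) t := by
  have hre : HasDerivAt (fun t => (f t).re) f'.re t :=
    Complex.reCLM.hasFDerivAt.comp_hasDerivAt t hf
  have him : HasDerivAt (fun t => (f t).im) f'.im t :=
    Complex.imCLM.hasFDerivAt.comp_hasDerivAt t hf
  have h : HasDerivAt (fun t => (f t).re ^ 2 + (f t).im ^ 2)
      (2 * (f t).re * f'.re + 2 * (f t).im * f'.im) t := by
    have h1 := (hre.fun_pow 2)
    have h2 := (him.fun_pow 2)
    simpa [mul_comm, mul_assoc, mul_left_comm] using h1.fun_add h2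
  have heq : (fun t => ‖f t‖ ^ 2) = fun t => (f t).re ^ 2 + (f t).im ^ 2 := by
    funext s
    rw [Complex.sq_norm, Complex.normSq_apply]
    ring
  rw [heq]
  convert h using 1
  simp [Complex.mul_re, Complex.conj_re, Complex.conj_im]
  ring

/-- The algebraic cancellation at the heart of charge conservation for the Dirac system. -/
lemma lorenz_dirac_cancel (z w : ℂ) (m r₁ r₂ : ℝ) :
    ((starRingEnd ℂ) z * (-Complex.I * (m:ℂ) * w + Complex.I * ((r₁ : ℝ):ℂ) * z
      + 2 * Complex.I * ((‖w‖^2 : ℝ):ℂ) * z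
      + 2 * Complex.I * (((z * (starRingEnd ℂ) w).re : ℝ):ℂ) * w)).re
    + ((starRingEnd ℂ) w * (-Complex.I * (m:ℂ) * z + Complex.I * ((r₂ : ℝ):ℂ) * w
      + 2 * Complex.I * ((‖z‖^2 : ℝ):ℂ) * w
      + 2 * Complex.I * (((z * (starRingEnd ℂ) w).re : ℝ):ℂ) * z)).re = 0 := by
  simp [Complex.add_re, Complex.mul_re, Complex.mul_im, Complex.conj_re, Complex.conj_im,
    Complex.I_re, Complex.I_im, Complex.ofReal_re, Complex.ofReal_im, Complex.sq_norm,
    Complex.normSq_apply]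
  ring

section PD
variable {E : Type*} [NormedAddCommGroup E] [NormedSpace ℝ E]

/-- First partial derivative of a function of two real variables. -/
noncomputable def lorenzPd1 (u : ℝ → ℝ → E) : ℝ → ℝ → E :=
  fun x t => fderiv ℝ (Function.uncurry u) (x, t) (1, 0)

/-- Second partial derivative of a function of two real variables. -/
noncomputable def lorenzPd2 (u : ℝ → ℝ → E) : ℝ → ℝ → E :=
  fun x t => fderiv ℝ (Function.uncurry u) (x, t) (0, 1)

lemma lorenz_hasDerivAt_pd1 {u : ℝ → ℝ → E} (hu : ContDiff ℝ 1 (Function.uncurry u)) (x t : ℝ) :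
    HasDerivAt (fun ξ => u ξ t) (lorenzPd1 u x t) x := by
  have hf := (hu.differentiable one_ne_zero (x, t)).hasFDerivAt
  have hg : HasDerivAt (fun ξ : ℝ => (ξ, t)) ((1 : ℝ), (0 : ℝ)) x :=
    (hasDerivAt_id x).prodMk (hasDerivAt_const x t)
  exact hf.comp_hasDerivAt x hg

lemma lorenz_hasDerivAt_pd2 {u : ℝ → ℝ → E} (hu : ContDiff ℝ 1 (Function.uncurry u)) (x t : ℝ) :
    HasDerivAt (fun τ => u x τ) (lorenzPd2 u x t) t := by
  have hf := (hu.differentiable one_ne_zero (x, t)).hasFDerivAt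
  have hg : HasDerivAt (fun τ : ℝ => (x, τ)) ((0 : ℝ), (1 : ℝ)) t :=
    (hasDerivAt_const t x).prodMk (hasDerivAt_id t)
  exact hf.comp_hasDerivAt t hg

lemma lorenz_continuous_pd1 {u : ℝ → ℝ → E} (hu : ContDiff ℝ 1 (Function.uncurry u)) :
    Continuous (Function.uncurry (lorenzPd1 u)) :=
  (hu.continuous_fderiv one_ne_zero).clm_apply continuous_const

lemma lorenz_continuous_pd2 {u : ℝ → ℝ → E} (hu : ContDiff ℝ 1 (Function.uncurry u)) :
    Continuous (Function.uncurry (lorenzPd2 u)) :=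
  (hu.continuous_fderiv one_ne_zero).clm_apply continuous_const

end PD

/-- `ContDiff` of the squared norm of a `C¹` complex field. -/
lemma lorenz_contDiff_norm_sq {w : ℝ → ℝ → ℂ} (hw : ContDiff ℝ 1 (Function.uncurry w)) :
    ContDiff ℝ 1 (Function.uncurry fun y s : ℝ => ‖w y s‖ ^ 2) := by
  have heq : (Function.uncurry fun y s : ℝ => ‖w y s‖ ^ 2)
      = fun p : ℝ × ℝ => (Function.uncurry w p).re ^ 2 + (Function.uncurry w p).im ^ 2 := by
    funext p
    simp only [Function.uncurry]
    rw [Complex.sq_norm, Complex.normSq_apply]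
    ring
  rw [heq]
  exact ((Complex.reCLM.contDiff.comp hw).pow 2).add ((Complex.imCLM.contDiff.comp hw).pow 2)

end AuxLemmas

open MeasureTheory Set

/-- The Dirac (spinor) part of the Maxwell–Dirac–Thirring–Gross–Neveu system on the
time slab `ℝ × [0,T]`, in null-coordinate form, with all coupling constants equal to `1`
and mass `m`:
`(∂_t + ∂_x)u = −imv + i(A₀+A₁)u + 2i|v|²u + 2i Re(u v̄)v`,
`(∂_t − ∂_x)v = −imu + i(A₀−A₁)v + 2i|u|²v + 2i Re(u v̄)u`. -/
def DiracSystem (m T : ℝ) (A₀ A₁ : ℝ → ℝ → ℝ) (u v : ℝ → ℝ → ℂ) : Prop :=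
  ∀ x : ℝ, ∀ t ∈ Set.Icc (0:ℝ) T,
    (deriv (fun τ => u x τ) t + deriv (fun ξ => u ξ t) x =
      -Complex.I * (m : ℂ) * v x t
      + Complex.I * ((A₀ x t + A₁ x t : ℝ) : ℂ) * u x t
      + 2 * Complex.I * ((‖v x t‖ ^ 2 : ℝ) : ℂ) * u x t
      + 2 * Complex.I * (((u x t * (starRingEnd ℂ) (v x t)).re : ℝ) : ℂ) * v x t)
    ∧
    (deriv (fun τ => v x τ) t - deriv (fun ξ => v ξ t) x =
      -Complex.I * (m : ℂ) * u x t
      + Complex.I * ((A₀ x t - A₁ x t : ℝ) : ℂ) * v x t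
      + 2 * Complex.I * ((‖u x t‖ ^ 2 : ℝ) : ℂ) * v x t
      + 2 * Complex.I * (((u x t * (starRingEnd ℂ) (v x t)).re : ℝ) : ℂ) * u x t)

set_option maxHeartbeats 2000000 in
/-- If the potentials `A₀, A₁` are given by D'Alembert's formulas with charge-density
sources, `u, v` solve the Dirac system, and the Gauss law `E₀′ = |u(·,0)|² + |v(·,0)|²`
holds initially, then the Lorenz gauge condition `∂_t A₀ = ∂_x A₁` holds on `ℝ × (0,T)`. -/
theorem lorenz_gauge_propagation (T m : ℝ) (hT : 0 < T) (hm : 0 ≤ m)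
    (a₀ a₁ E₀ : ℝ → ℝ)
    (ha₀ : ContDiff ℝ 1 a₀) (ha₁ : ContDiff ℝ 1 a₁) (hE₀ : ContDiff ℝ 1 E₀)
    (u v : ℝ → ℝ → ℂ)
    (hu : ContDiff ℝ 1 (Function.uncurry u)) (hv : ContDiff ℝ 1 (Function.uncurry v))
    (huloc : ∀ t : ℝ, LocallyIntegrable (fun x => ‖u x t‖ ^ 2) (volume : Measure ℝ))
    (hvloc : ∀ t : ℝ, LocallyIntegrable (fun x => ‖v x t‖ ^ 2) (volume : Measure ℝ))
    (A₀ A₁ : ℝ → ℝ → ℝ)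
    (hA₀ : ∀ x t : ℝ, A₀ x t =
      (a₀ (x + t) + a₀ (x - t)) / 2 + (a₁ (x + t) - a₁ (x - t)) / 2
      - (1/2) * ∫ s in (0:ℝ)..t, ∫ y in (x - (t - s))..(x + (t - s)),
          (‖u y s‖ ^ 2 + ‖v y s‖ ^ 2))
    (hA₁ : ∀ x t : ℝ, A₁ x t =
      (a₀ (x + t) - a₀ (x - t)) / 2 + (a₁ (x + t) + a₁ (x - t)) / 2
      - (1/2) * (∫ y in (x - t)..(x + t), E₀ y)
      + (1/2) * ∫ s in (0:ℝ)..t, ∫ y in (x - (t - s))..(x + (t - s)),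
          (‖u y s‖ ^ 2 - ‖v y s‖ ^ 2))
    (hsol : DiracSystem m T A₀ A₁ u v)
    (hGauss : ∀ x : ℝ, deriv E₀ x = ‖u x 0‖ ^ 2 + ‖v x 0‖ ^ 2) :
    ∀ x : ℝ, ∀ t ∈ Set.Ioo (0:ℝ) T,
      deriv (fun τ => A₀ x τ) t = deriv (fun ξ => A₁ ξ t) x := by
  intro x t ht
  -- smoothness of the charge densities
  have hρcd : ContDiff ℝ 1 (Function.uncurry fun y s : ℝ => ‖u y s‖ ^ 2 + ‖v y s‖ ^ 2) :=
    (lorenz_contDiff_norm_sq hu).add (lorenz_contDiff_norm_sq hv)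
  have hjcd : ContDiff ℝ 1 (Function.uncurry fun y s : ℝ => ‖u y s‖ ^ 2 - ‖v y s‖ ^ 2) :=
    (lorenz_contDiff_norm_sq hu).sub (lorenz_contDiff_norm_sq hv)
  have hρcont : Continuous fun p : ℝ × ℝ => ‖u p.1 p.2‖ ^ 2 + ‖v p.1 p.2‖ ^ 2 := hρcd.continuous
  have hjcont : Continuous fun p : ℝ × ℝ => ‖u p.1 p.2‖ ^ 2 - ‖v p.1 p.2‖ ^ 2 := hjcd.continuous
  -- conservation law : ∂ₜρ = -∂ₓj on the slab
  have hcons : ∀ y s : ℝ, s ∈ Set.Icc (0:ℝ) T →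
      lorenzPd2 (fun y s : ℝ => ‖u y s‖ ^ 2 + ‖v y s‖ ^ 2) y s
        = - lorenzPd1 (fun y s : ℝ => ‖u y s‖ ^ 2 - ‖v y s‖ ^ 2) y s := by
    intro y s hs
    have e1 : lorenzPd2 (fun y s : ℝ => ‖u y s‖ ^ 2 + ‖v y s‖ ^ 2) y s
        = 2 * ((starRingEnd ℂ) (u y s) * lorenzPd2 u y s).re
          + 2 * ((starRingEnd ℂ) (v y s) * lorenzPd2 v y s).re :=
      (lorenz_hasDerivAt_pd2 hρcd y s).unique
        ((lorenz_hasDerivAt_norm_sq (lorenz_hasDerivAt_pd2 hu y s)).add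
          (lorenz_hasDerivAt_norm_sq (lorenz_hasDerivAt_pd2 hv y s)))
    have e2 : lorenzPd1 (fun y s : ℝ => ‖u y s‖ ^ 2 - ‖v y s‖ ^ 2) y s
        = 2 * ((starRingEnd ℂ) (u y s) * lorenzPd1 u y s).re
          - 2 * ((starRingEnd ℂ) (v y s) * lorenzPd1 v y s).re :=
      (lorenz_hasDerivAt_pd1 hjcd y s).unique
        ((lorenz_hasDerivAt_norm_sq (lorenz_hasDerivAt_pd1 hu y s)).sub
          (lorenz_hasDerivAt_norm_sq (lorenz_hasDerivAt_pd1 hv y s)))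
    obtain ⟨h1d, h2d⟩ := hsol y s hs
    rw [(lorenz_hasDerivAt_pd2 hu y s).deriv, (lorenz_hasDerivAt_pd1 hu y s).deriv] at h1d
    rw [(lorenz_hasDerivAt_pd2 hv y s).deriv, (lorenz_hasDerivAt_pd1 hv y s).deriv] at h2d
    have hz := lorenz_dirac_cancel (u y s) (v y s) m (A₀ y s + A₁ y s) (A₀ y s - A₁ y s)
    rw [← h1d, ← h2d] at hz
    simp only [mul_add, mul_sub, Complex.add_re, Complex.sub_re] at hz
    rw [e1, e2]
    linarith
  -- translate-derivative helpers
  have hplus : ∀ (g : ℝ → ℝ), ContDiff ℝ 1 g → ∀ c s : ℝ,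
      HasDerivAt (fun τ => g (c + τ)) (deriv g (c + s)) s := by
    intro g hg c s
    have h1 := (hg.differentiable one_ne_zero (c + s)).hasDerivAt
    have h2 : HasDerivAt (fun τ : ℝ => c + τ) 1 s := by
      simpa using (hasDerivAt_id s).const_add c
    simpa [Function.comp_def] using h1.comp s h2
  have hminus : ∀ (g : ℝ → ℝ), ContDiff ℝ 1 g → ∀ c s : ℝ,
      HasDerivAt (fun τ => g (c - τ)) (-deriv g (c - s)) s := by
    intro g hg c s
    have h1 := (hg.differentiable one_ne_zero (c - s)).hasDerivAt
    have h2 : HasDerivAt (fun τ : ℝ => c - τ) (-1) s := by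
      simpa using (hasDerivAt_id s).const_sub c
    simpa [Function.comp_def] using h1.comp s h2
  have hplus' : ∀ (g : ℝ → ℝ), ContDiff ℝ 1 g → ∀ c s : ℝ,
      HasDerivAt (fun ξ => g (ξ + c)) (deriv g (s + c)) s := by
    intro g hg c s
    have h1 := (hg.differentiable one_ne_zero (s + c)).hasDerivAt
    have h2 : HasDerivAt (fun ξ : ℝ => ξ + c) 1 s := (hasDerivAt_id s).add_const c
    simpa [Function.comp_def] using h1.comp s h2
  have hminus' : ∀ (g : ℝ → ℝ), ContDiff ℝ 1 g → ∀ c s : ℝ,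
      HasDerivAt (fun ξ => g (ξ - c)) (deriv g (s - c)) s := by
    intro g hg c s
    have h1 := (hg.differentiable one_ne_zero (s - c)).hasDerivAt
    have h2 : HasDerivAt (fun ξ : ℝ => ξ - c) 1 s := (hasDerivAt_id s).sub_const c
    simpa [Function.comp_def] using h1.comp s h2
  -- inner-integral derivatives in the parameter
  have hd₀ : ∀ τ s : ℝ, HasDerivAt
      (fun q => ∫ y in (x - (q - s))..(x + (q - s)), (‖u y s‖ ^ 2 + ‖v y s‖ ^ 2))
      ((‖u (x + (τ - s)) s‖ ^ 2 + ‖v (x + (τ - s)) s‖ ^ 2)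
        + (‖u (x - (τ - s)) s‖ ^ 2 + ‖v (x - (τ - s)) s‖ ^ 2)) τ := by
    intro τ s
    have he₁ : HasDerivAt (fun q : ℝ => x - (q - s)) (-1) τ := by
      simpa using ((hasDerivAt_id τ).sub_const s).const_sub x
    have he₂ : HasDerivAt (fun q : ℝ => x + (q - s)) 1 τ :=
      ((hasDerivAt_id τ).sub_const s).const_add x
    have h := lorenz_leibniz (fun (_ y : ℝ) => (‖u y s‖ ^ 2 + ‖v y s‖ ^ 2)) (fun _ _ => (0:ℝ))
      (hρcont.comp (continuous_snd.prodMk continuous_const))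
      continuous_const (fun r y => hasDerivAt_const r _) he₁ he₂
    simpa only [mul_one, mul_neg_one, sub_neg_eq_add, intervalIntegral.integral_zero,
      add_zero] using h
  have hd₁ : ∀ ξ s : ℝ, HasDerivAt
      (fun q => ∫ y in (q - (t - s))..(q + (t - s)), (‖u y s‖ ^ 2 - ‖v y s‖ ^ 2))
      ((‖u (ξ + (t - s)) s‖ ^ 2 - ‖v (ξ + (t - s)) s‖ ^ 2)
        - (‖u (ξ - (t - s)) s‖ ^ 2 - ‖v (ξ - (t - s)) s‖ ^ 2)) ξ := by
    intro ξ s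
    have he₁ : HasDerivAt (fun q : ℝ => q - (t - s)) 1 ξ := (hasDerivAt_id ξ).sub_const _
    have he₂ : HasDerivAt (fun q : ℝ => q + (t - s)) 1 ξ := (hasDerivAt_id ξ).add_const _
    have h := lorenz_leibniz (fun (_ y : ℝ) => (‖u y s‖ ^ 2 - ‖v y s‖ ^ 2)) (fun _ _ => (0:ℝ))
      (hjcont.comp (continuous_snd.prodMk continuous_const))
      continuous_const (fun r y => hasDerivAt_const r _) he₁ he₂
    simpa only [mul_one, intervalIntegral.integral_zero, add_zero] using h
  -- joint continuity of the inner integrals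
  have hF₀c : Continuous (Function.uncurry fun (τ s : ℝ) =>
      ∫ y in (x - (τ - s))..(x + (τ - s)), (‖u y s‖ ^ 2 + ‖v y s‖ ^ 2)) := by
    have h := lorenz_cont_param_integral (fun y s => ‖u y s‖ ^ 2 + ‖v y s‖ ^ 2) hρcd.continuous
      (fun p : ℝ × ℝ => x - (p.1 - p.2)) (fun p : ℝ × ℝ => x + (p.1 - p.2))
      (fun p : ℝ × ℝ => p.2) (by fun_prop) (by fun_prop) continuous_snd
    exact h
  have hF₁c : Continuous (Function.uncurry fun (ξ s : ℝ) =>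
      ∫ y in (ξ - (t - s))..(ξ + (t - s)), (‖u y s‖ ^ 2 - ‖v y s‖ ^ 2)) := by
    have h := lorenz_cont_param_integral (fun y s => ‖u y s‖ ^ 2 - ‖v y s‖ ^ 2) hjcd.continuous
      (fun p : ℝ × ℝ => p.1 - (t - p.2)) (fun p : ℝ × ℝ => p.1 + (t - p.2))
      (fun p : ℝ × ℝ => p.2) (by fun_prop) (by fun_prop) continuous_snd
    exact h
  have hplus2 : Continuous fun p : ℝ × ℝ => (x + (p.1 - p.2), p.2) := by fun_prop
  have hminus2 : Continuous fun p : ℝ × ℝ => (x - (p.1 - p.2), p.2) := by fun_prop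
  have hplus3 : Continuous fun p : ℝ × ℝ => (p.1 + (t - p.2), p.2) := by fun_prop
  have hminus3 : Continuous fun p : ℝ × ℝ => (p.1 - (t - p.2), p.2) := by fun_prop
  have hF₀'c : Continuous (Function.uncurry fun (τ s : ℝ) =>
      (‖u (x + (τ - s)) s‖ ^ 2 + ‖v (x + (τ - s)) s‖ ^ 2)
        + (‖u (x - (τ - s)) s‖ ^ 2 + ‖v (x - (τ - s)) s‖ ^ 2)) := by
    have h := (hρcont.comp hplus2).add (hρcont.comp hminus2)
    exact h
  have hF₁'c : Continuous (Function.uncurry fun (ξ s : ℝ) =>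
      (‖u (ξ + (t - s)) s‖ ^ 2 - ‖v (ξ + (t - s)) s‖ ^ 2)
        - (‖u (ξ - (t - s)) s‖ ^ 2 - ‖v (ξ - (t - s)) s‖ ^ 2)) := by
    have h := (hjcont.comp hplus3).sub (hjcont.comp hminus3)
    exact h
  -- derivative in t of the double integral of A₀
  have hGd : HasDerivAt (fun τ => ∫ s in (0:ℝ)..τ, ∫ y in (x - (τ - s))..(x + (τ - s)),
      (‖u y s‖ ^ 2 + ‖v y s‖ ^ 2))
      (∫ s in (0:ℝ)..t, ((‖u (x + (t - s)) s‖ ^ 2 + ‖v (x + (t - s)) s‖ ^ 2)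
        + (‖u (x - (t - s)) s‖ ^ 2 + ‖v (x - (t - s)) s‖ ^ 2))) t := by
    have h := lorenz_leibniz _ _ hF₀c hF₀'c hd₀ (hasDerivAt_const t (0:ℝ)) (hasDerivAt_id t)
    simpa using h
  -- derivative in x of the double integral of A₁
  have hHd : HasDerivAt (fun ξ => ∫ s in (0:ℝ)..t, ∫ y in (ξ - (t - s))..(ξ + (t - s)),
      (‖u y s‖ ^ 2 - ‖v y s‖ ^ 2))
      (∫ s in (0:ℝ)..t, ((‖u (x + (t - s)) s‖ ^ 2 - ‖v (x + (t - s)) s‖ ^ 2)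
        - (‖u (x - (t - s)) s‖ ^ 2 - ‖v (x - (t - s)) s‖ ^ 2))) x := by
    have h := lorenz_leibniz _ _ hF₁c hF₁'c hd₁ (hasDerivAt_const x (0:ℝ)) (hasDerivAt_const x t)
    simpa using h
  -- derivative in x of the E₀ integral
  have hEd : HasDerivAt (fun ξ => ∫ y in (ξ - t)..(ξ + t), E₀ y) (E₀ (x + t) - E₀ (x - t)) x := by
    have h := lorenz_leibniz (fun (_ y : ℝ) => E₀ y) (fun _ _ => (0:ℝ))
      (hE₀.continuous.comp continuous_snd) continuous_const
      (fun r y => hasDerivAt_const r _)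
      ((hasDerivAt_id x).sub_const t) ((hasDerivAt_id x).add_const t)
    simpa using h
  -- continuity of the boundary-flux integrands
  have hb1 : Continuous fun s : ℝ => (x + (t - s), s) := by fun_prop
  have hb2 : Continuous fun s : ℝ => (x - (t - s), s) := by fun_prop
  have hcρ : Continuous fun s : ℝ => (‖u (x + (t - s)) s‖ ^ 2 + ‖v (x + (t - s)) s‖ ^ 2)
      + (‖u (x - (t - s)) s‖ ^ 2 + ‖v (x - (t - s)) s‖ ^ 2) := by
    have h := (hρcont.comp hb1).add (hρcont.comp hb2)
    exact h
  have hcj : Continuous fun s : ℝ => (‖u (x + (t - s)) s‖ ^ 2 - ‖v (x + (t - s)) s‖ ^ 2)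
      - (‖u (x - (t - s)) s‖ ^ 2 - ‖v (x - (t - s)) s‖ ^ 2) := by
    have h := (hjcont.comp hb1).sub (hjcont.comp hb2)
    exact h
  -- the conservation identity over the light triangle
  have hKderiv : ∀ s ∈ uIcc (0:ℝ) t, HasDerivAt
      (fun s => (∫ y in (x - (t - s))..(x + (t - s)), (‖u y s‖ ^ 2 + ‖v y s‖ ^ 2))
        + ∫ σ in (0:ℝ)..s, (((‖u (x + (t - σ)) σ‖ ^ 2 + ‖v (x + (t - σ)) σ‖ ^ 2)
            + (‖u (x - (t - σ)) σ‖ ^ 2 + ‖v (x - (t - σ)) σ‖ ^ 2))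
          + ((‖u (x + (t - σ)) σ‖ ^ 2 - ‖v (x + (t - σ)) σ‖ ^ 2)
            - (‖u (x - (t - σ)) σ‖ ^ 2 - ‖v (x - (t - σ)) σ‖ ^ 2)))) ((fun _ => (0:ℝ)) s) s := by
    intro s hs
    have hsIcc : s ∈ Set.Icc (0:ℝ) T := by
      rw [uIcc_of_le ht.1.le] at hs
      exact ⟨hs.1, hs.2.trans ht.2.le⟩
    have hswapc : Continuous (Function.uncurry fun (s y : ℝ) => ‖u y s‖ ^ 2 + ‖v y s‖ ^ 2) := by
      have h := hρcont.comp (continuous_snd.prodMk continuous_fst)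
      exact h
    have hswapc' : Continuous (Function.uncurry fun (s y : ℝ) =>
        lorenzPd2 (fun y s : ℝ => ‖u y s‖ ^ 2 + ‖v y s‖ ^ 2) y s) := by
      have h := (lorenz_continuous_pd2 hρcd).comp (continuous_snd.prodMk continuous_fst)
      exact h
    have he₁ : HasDerivAt (fun s : ℝ => x - (t - s)) 1 s := by
      simpa using ((hasDerivAt_id s).const_sub t).const_sub x
    have he₂ : HasDerivAt (fun s : ℝ => x + (t - s)) (-1) s := by
      simpa using ((hasDerivAt_id s).const_sub t).const_add x
    have h1 := lorenz_leibniz (fun (s y : ℝ) => ‖u y s‖ ^ 2 + ‖v y s‖ ^ 2)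
      (fun (s y : ℝ) => lorenzPd2 (fun y s : ℝ => ‖u y s‖ ^ 2 + ‖v y s‖ ^ 2) y s)
      hswapc hswapc' (fun r y => lorenz_hasDerivAt_pd2 hρcd y r) he₁ he₂
    have hFTC : (∫ y in (x - (t - s))..(x + (t - s)),
        lorenzPd2 (fun y s : ℝ => ‖u y s‖ ^ 2 + ‖v y s‖ ^ 2) y s)
        = -((‖u (x + (t - s)) s‖ ^ 2 - ‖v (x + (t - s)) s‖ ^ 2)
          - (‖u (x - (t - s)) s‖ ^ 2 - ‖v (x - (t - s)) s‖ ^ 2)) := by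
      have hcongr : (∫ y in (x - (t - s))..(x + (t - s)),
          lorenzPd2 (fun y s : ℝ => ‖u y s‖ ^ 2 + ‖v y s‖ ^ 2) y s)
          = ∫ y in (x - (t - s))..(x + (t - s)),
            -lorenzPd1 (fun y s : ℝ => ‖u y s‖ ^ 2 - ‖v y s‖ ^ 2) y s :=
        intervalIntegral.integral_congr (fun y _ => hcons y s hsIcc)
      have hsub : (∫ y in (x - (t - s))..(x + (t - s)),
          lorenzPd1 (fun y s : ℝ => ‖u y s‖ ^ 2 - ‖v y s‖ ^ 2) y s)
          = (‖u (x + (t - s)) s‖ ^ 2 - ‖v (x + (t - s)) s‖ ^ 2)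
            - (‖u (x - (t - s)) s‖ ^ 2 - ‖v (x - (t - s)) s‖ ^ 2) :=
        intervalIntegral.integral_eq_sub_of_hasDerivAt
          (fun y _ => lorenz_hasDerivAt_pd1 hjcd y s)
          (((lorenz_continuous_pd1 hjcd).comp
            (continuous_id.prodMk continuous_const)).intervalIntegrable _ _)
      rw [hcongr, intervalIntegral.integral_neg, hsub]
    have h1' : HasDerivAt (fun s : ℝ => ∫ y in (x - (t - s))..(x + (t - s)),
        (‖u y s‖ ^ 2 + ‖v y s‖ ^ 2))
        (-(((‖u (x + (t - s)) s‖ ^ 2 + ‖v (x + (t - s)) s‖ ^ 2)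
            + (‖u (x - (t - s)) s‖ ^ 2 + ‖v (x - (t - s)) s‖ ^ 2))
          + ((‖u (x + (t - s)) s‖ ^ 2 - ‖v (x + (t - s)) s‖ ^ 2)
            - (‖u (x - (t - s)) s‖ ^ 2 - ‖v (x - (t - s)) s‖ ^ 2)))) s := by
      convert h1 using 1
      rw [hFTC]
      ring
    have h2 : HasDerivAt (fun s : ℝ => ∫ σ in (0:ℝ)..s,
        (((‖u (x + (t - σ)) σ‖ ^ 2 + ‖v (x + (t - σ)) σ‖ ^ 2)
            + (‖u (x - (t - σ)) σ‖ ^ 2 + ‖v (x - (t - σ)) σ‖ ^ 2))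
          + ((‖u (x + (t - σ)) σ‖ ^ 2 - ‖v (x + (t - σ)) σ‖ ^ 2)
            - (‖u (x - (t - σ)) σ‖ ^ 2 - ‖v (x - (t - σ)) σ‖ ^ 2))))
        (((‖u (x + (t - s)) s‖ ^ 2 + ‖v (x + (t - s)) s‖ ^ 2)
            + (‖u (x - (t - s)) s‖ ^ 2 + ‖v (x - (t - s)) s‖ ^ 2))
          + ((‖u (x + (t - s)) s‖ ^ 2 - ‖v (x + (t - s)) s‖ ^ 2)
            - (‖u (x - (t - s)) s‖ ^ 2 - ‖v (x - (t - s)) s‖ ^ 2))) s := by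
      have h := lorenz_leibniz (fun (_ σ : ℝ) =>
          (((‖u (x + (t - σ)) σ‖ ^ 2 + ‖v (x + (t - σ)) σ‖ ^ 2)
            + (‖u (x - (t - σ)) σ‖ ^ 2 + ‖v (x - (t - σ)) σ‖ ^ 2))
          + ((‖u (x + (t - σ)) σ‖ ^ 2 - ‖v (x + (t - σ)) σ‖ ^ 2)
            - (‖u (x - (t - σ)) σ‖ ^ 2 - ‖v (x - (t - σ)) σ‖ ^ 2)))) (fun _ _ => (0:ℝ))
        ((hcρ.fun_add hcj).comp continuous_snd) continuous_const
        (fun r σ => hasDerivAt_const r _) (hasDerivAt_const s (0:ℝ)) (hasDerivAt_id s)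
      simpa using h
    have hsum := h1'.fun_add h2
    simpa only [neg_add_cancel] using hsum
  have hK := intervalIntegral.integral_eq_sub_of_hasDerivAt hKderiv
    (_root_.intervalIntegrable_const (c := (0:ℝ)))
  simp only [intervalIntegral.integral_const, smul_zero, sub_self, sub_zero, add_zero,
    intervalIntegral.integral_same, zero_add] at hK
  -- Gauss law
  have hGaussInt : (∫ y in (x - t)..(x + t), (‖u y 0‖ ^ 2 + ‖v y 0‖ ^ 2))
      = E₀ (x + t) - E₀ (x - t) := by
    have h1 : (∫ y in (x - t)..(x + t), deriv E₀ y) = E₀ (x + t) - E₀ (x - t) :=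
      intervalIntegral.integral_eq_sub_of_hasDerivAt
        (fun y _ => (hE₀.differentiable one_ne_zero y).hasDerivAt)
        ((hE₀.continuous_deriv le_rfl).intervalIntegrable _ _)
    rw [← h1]
    exact intervalIntegral.integral_congr fun y _ => (hGauss y).symm
  -- assemble both sides
  have hLa : HasDerivAt (fun τ => (a₀ (x + τ) + a₀ (x - τ)) / 2 + (a₁ (x + τ) - a₁ (x - τ)) / 2
      - 1 / 2 * ∫ s in (0:ℝ)..τ, ∫ y in (x - (τ - s))..(x + (τ - s)),
        (‖u y s‖ ^ 2 + ‖v y s‖ ^ 2))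
      ((deriv a₀ (x + t) + -deriv a₀ (x - t)) / 2
        + (deriv a₁ (x + t) - -deriv a₁ (x - t)) / 2
        - 1 / 2 * ∫ s in (0:ℝ)..t, ((‖u (x + (t - s)) s‖ ^ 2 + ‖v (x + (t - s)) s‖ ^ 2)
          + (‖u (x - (t - s)) s‖ ^ 2 + ‖v (x - (t - s)) s‖ ^ 2))) t :=
    ((((hplus a₀ ha₀ x t).add (hminus a₀ ha₀ x t)).div_const 2).add
      (((hplus a₁ ha₁ x t).sub (hminus a₁ ha₁ x t)).div_const 2)).sub (hGd.const_mul (1/2))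
  have hRa : HasDerivAt (fun ξ => (a₀ (ξ + t) - a₀ (ξ - t)) / 2 + (a₁ (ξ + t) + a₁ (ξ - t)) / 2
      - 1 / 2 * (∫ y in (ξ - t)..(ξ + t), E₀ y)
      + 1 / 2 * ∫ s in (0:ℝ)..t, ∫ y in (ξ - (t - s))..(ξ + (t - s)),
        (‖u y s‖ ^ 2 - ‖v y s‖ ^ 2))
      ((deriv a₀ (x + t) - deriv a₀ (x - t)) / 2
        + (deriv a₁ (x + t) + deriv a₁ (x - t)) / 2
        - 1 / 2 * (E₀ (x + t) - E₀ (x - t))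
        + 1 / 2 * ∫ s in (0:ℝ)..t, ((‖u (x + (t - s)) s‖ ^ 2 - ‖v (x + (t - s)) s‖ ^ 2)
          - (‖u (x - (t - s)) s‖ ^ 2 - ‖v (x - (t - s)) s‖ ^ 2))) x :=
    (((((hplus' a₀ ha₀ t x).sub (hminus' a₀ ha₀ t x)).div_const 2).add
      (((hplus' a₁ ha₁ t x).add (hminus' a₁ ha₁ t x)).div_const 2)).sub
        (hEd.const_mul (1/2))).add (hHd.const_mul (1/2))
  have egoal₀ : (fun τ => A₀ x τ) = fun τ =>
      (a₀ (x + τ) + a₀ (x - τ)) / 2 + (a₁ (x + τ) - a₁ (x - τ)) / 2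
      - 1 / 2 * ∫ s in (0:ℝ)..τ, ∫ y in (x - (τ - s))..(x + (τ - s)),
        (‖u y s‖ ^ 2 + ‖v y s‖ ^ 2) := funext fun τ => hA₀ x τ
  have egoal₁ : (fun ξ => A₁ ξ t) = fun ξ =>
      (a₀ (ξ + t) - a₀ (ξ - t)) / 2 + (a₁ (ξ + t) + a₁ (ξ - t)) / 2
      - 1 / 2 * (∫ y in (ξ - t)..(ξ + t), E₀ y)
      + 1 / 2 * ∫ s in (0:ℝ)..t, ∫ y in (ξ - (t - s))..(ξ + (t - s)),
        (‖u y s‖ ^ 2 - ‖v y s‖ ^ 2) := funext fun ξ => hA₁ ξ t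
  rw [egoal₀, egoal₁, hLa.deriv, hRa.deriv]
  -- final arithmetic
  have hsplit : (∫ s in (0:ℝ)..t, (((‖u (x + (t - s)) s‖ ^ 2 + ‖v (x + (t - s)) s‖ ^ 2)
        + (‖u (x - (t - s)) s‖ ^ 2 + ‖v (x - (t - s)) s‖ ^ 2))
      + ((‖u (x + (t - s)) s‖ ^ 2 - ‖v (x + (t - s)) s‖ ^ 2)
        - (‖u (x - (t - s)) s‖ ^ 2 - ‖v (x - (t - s)) s‖ ^ 2))))
      = (∫ s in (0:ℝ)..t, ((‖u (x + (t - s)) s‖ ^ 2 + ‖v (x + (t - s)) s‖ ^ 2)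
          + (‖u (x - (t - s)) s‖ ^ 2 + ‖v (x - (t - s)) s‖ ^ 2)))
        + ∫ s in (0:ℝ)..t, ((‖u (x + (t - s)) s‖ ^ 2 - ‖v (x + (t - s)) s‖ ^ 2)
          - (‖u (x - (t - s)) s‖ ^ 2 - ‖v (x - (t - s)) s‖ ^ 2)) :=
    intervalIntegral.integral_add (hcρ.intervalIntegrable _ _) (hcj.intervalIntegrable _ _)
  rw [hsplit] at hK
  linarith [hGaussInt, hK]
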